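/- Let K := {z ∈ ℂ : |z − 1| ≤ 1} ∪ {z ∈ ℂ : |z + 1| ≤ 1} and let P(K) denote the closure, in the supremum norm of C(K, ℂ), of the subalgebra of functions on K given by restrictions of complex polynomials. If f ∈ P(K) and the complex conjugate function z ↦ conj(f(z)) also belongs to P(K), then f is a constant function. -/

import Mathlib

open Complex Metric Filter Set Topology

private lemma poly_limit_diffOn {K : Set ℂ} (hKc : IsCompact K)
    (h : C(K, ℂ)) (H : ℂ → ℂ) (hH : ∀ z (hz : z ∈ K), H z = h ⟨z, hz⟩)
    (hmem : h ∈ closure {g : C(K, ℂ) | ∃ p : Polynomial ℂ, ∀ z : K, g z = p.eval (z : ℂ)}) :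
    DifferentiableOn ℂ H (interior K) := by
  haveI : CompactSpace K := isCompact_iff_compactSpace.mp hKc
  obtain ⟨u, hu, hlim⟩ := mem_closure_iff_seq_limit.mp hmem
  choose p hp using hu
  have key : TendstoUniformly (fun n (x : K) => (p n).eval (x : ℂ)) (H ∘ Subtype.val) atTop := by
    have h0 := ContinuousMap.tendsto_iff_tendstoUniformly.mp hlim
    have e1 : (fun n (x : K) => (p n).eval (x : ℂ)) = fun n (x : K) => u n x := by
      funext n x; exact (hp n x).symm
    have e2 : H ∘ Subtype.val = fun x : K => h x := by
      funext x; exact hH x x.2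
    rw [e1, e2]; exact h0
  have hU : TendstoUniformlyOn (fun n z => (p n).eval z) H atTop K :=
    (tendstoUniformlyOn_iff_tendstoUniformly_comp_coe).mpr key
  exact ((hU.tendstoLocallyUniformlyOn.mono interior_subset).differentiableOn
    (Eventually.of_forall fun n => ((p n).differentiable).differentiableOn) isOpen_interior)

private lemma deriv_zero_of_conj {F : ℂ → ℂ} {x : ℂ}
    (hF : DifferentiableAt ℂ F x)
    (hG : DifferentiableAt ℂ (fun z => (starRingEnd ℂ) (F z)) x) :
    deriv F x = 0 := by
  set d := deriv F x with hd
  set e := deriv (fun z => (starRingEnd ℂ) (F z)) x with he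
  have h1 : HasFDerivAt F (((1 : ℂ →L[ℂ] ℂ).smulRight d).restrictScalars ℝ) x :=
    (hF.hasDerivAt.hasFDerivAt).restrictScalars ℝ
  have h2 : HasFDerivAt (fun z => (starRingEnd ℂ) (F z))
      (((1 : ℂ →L[ℂ] ℂ).smulRight e).restrictScalars ℝ) x :=
    (hG.hasDerivAt.hasFDerivAt).restrictScalars ℝ
  have h3 : HasFDerivAt F
      ((Complex.conjCLE.toContinuousLinearMap).comp
        (((1 : ℂ →L[ℂ] ℂ).smulRight e).restrictScalars ℝ)) x := by
    have hcomp := (Complex.conjCLE.toContinuousLinearMap.hasFDerivAt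
      (x := (fun z => (starRingEnd ℂ) (F z)) x)).comp x h2
    have : (Complex.conjCLE.toContinuousLinearMap ∘ fun z => (starRingEnd ℂ) (F z)) = F := by
      funext z; simp [Complex.conjCLE]
    rwa [this] at hcomp
  have huniq := h1.unique h3
  have hw1 : d = (starRingEnd ℂ) e := by
    have := ContinuousLinearMap.ext_iff.mp huniq 1
    simpa [Complex.conjCLE] using this
  have hwI : Complex.I * d = (starRingEnd ℂ) (Complex.I * e) := by
    have := ContinuousLinearMap.ext_iff.mp huniq Complex.I
    simpa [Complex.conjCLE, mul_comm] using this
  have : Complex.I * d = - (Complex.I * d) := by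
    calc Complex.I * d = (starRingEnd ℂ) (Complex.I * e) := hwI
      _ = (starRingEnd ℂ) Complex.I * (starRingEnd ℂ) e := map_mul _ _ _
      _ = -Complex.I * d := by rw [Complex.conj_I, ← hw1]
      _ = -(Complex.I * d) := by ring
  have h2Id : (2 * Complex.I) * d = 0 := by linear_combination this
  have hI : (2 * Complex.I) ≠ 0 := by simp [Complex.I_ne_zero]
  exact (mul_eq_zero.mp h2Id).resolve_left hI


/-- Let `K` be the union of the two closed unit discs centred at `1` and `-1`, and let
`P(K)` be the closure in `C(K, ℂ)` (with the topology of uniform convergence, i.e. the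
sup-norm topology, since `K` is compact) of the restrictions of complex polynomials.
If `f ∈ P(K)` and the pointwise complex conjugate of `f` also belongs to `P(K)`,
then `f` is constant. -/
theorem polynomial_closure_selfadjoint_implies_constant
    (K : Set ℂ)
    (hK : K = {z : ℂ | ‖z - 1‖ ≤ 1} ∪ {z : ℂ | ‖z + 1‖ ≤ 1})
    (PK : Set C(K, ℂ))
    (hPK : PK = closure {g : C(K, ℂ) | ∃ p : Polynomial ℂ, ∀ z : K, g z = p.eval (z : ℂ)})
    (f : C(K, ℂ)) (hf : f ∈ PK)
    (hconj : ∃ g ∈ PK, ∀ z : K, g z = starRingEnd ℂ (f z)) :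
    ∃ c : ℂ, ∀ z : K, f z = c := by
  classical
  obtain ⟨g, hg, hgf⟩ := hconj
  have hKball : K = closedBall (1:ℂ) 1 ∪ closedBall (-1:ℂ) 1 := by
    rw [hK]; ext z
    simp [Complex.dist_eq, sub_neg_eq_add]
  have hKc : IsCompact K := by
    rw [hKball]; exact (isCompact_closedBall _ _).union (isCompact_closedBall _ _)
  set F : ℂ → ℂ := fun z => if h : z ∈ K then f ⟨z, h⟩ else 0 with hFdef
  set G : ℂ → ℂ := fun z => if h : z ∈ K then g ⟨z, h⟩ else 0 with hGdef
  have hFK : ∀ z (hz : z ∈ K), F z = f ⟨z, hz⟩ := fun z hz => dif_pos hz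
  have hGK : ∀ z (hz : z ∈ K), G z = g ⟨z, hz⟩ := fun z hz => dif_pos hz
  rw [hPK] at hf hg
  have hFd : DifferentiableOn ℂ F (interior K) := poly_limit_diffOn hKc f F hFK hf
  have hGd : DifferentiableOn ℂ G (interior K) := poly_limit_diffOn hKc g G hGK hg
  have hderiv : ∀ x ∈ interior K, deriv F x = 0 := by
    intro x hx
    have hFa : DifferentiableAt ℂ F x := hFd.differentiableAt (isOpen_interior.mem_nhds hx)
    have hGa : DifferentiableAt ℂ G x := hGd.differentiableAt (isOpen_interior.mem_nhds hx)
    have hGa' : DifferentiableAt ℂ (fun z => (starRingEnd ℂ) (F z)) x := by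
      apply hGa.congr_of_eventuallyEq
      filter_upwards [isOpen_interior.mem_nhds hx] with z hz
      rw [hGK z (interior_subset hz), hFK z (interior_subset hz)]
      exact (hgf _).symm
    exact deriv_zero_of_conj hFa hGa'
  have hFc : ContinuousOn F K := by
    rw [continuousOn_iff_continuous_restrict]
    have : K.domRestrict F = fun x : K => f x := by
      funext x; exact hFK x x.2
    rw [this]; exact f.continuous
  have hball : ∀ c : ℂ, ball c 1 ⊆ interior K → closedBall c 1 ⊆ K →
      ∀ z ∈ closedBall c 1, F z = F c := by
    intro c hb hcb z hz
    have hconst : ∀ w ∈ ball c 1, F w = F c := by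
      intro w hw
      have hder0 : ∀ y ∈ ball c 1, fderivWithin ℂ F (ball c 1) y = 0 := by
        intro y hy
        rw [fderivWithin_of_isOpen isOpen_ball hy]
        have hFa : DifferentiableAt ℂ F y :=
          hFd.differentiableAt (isOpen_interior.mem_nhds (hb hy))
        have h0 : HasDerivAt F 0 y := by
          have := hFa.hasDerivAt; rwa [hderiv y (hb hy)] at this
        rw [h0.hasFDerivAt.fderiv]
        ext1; simp
      exact (convex_ball c 1).is_const_of_fderivWithin_eq_zero
        (hFd.mono hb) hder0 hw (mem_ball_self one_pos)
    have hcl : closure (ball c 1) = closedBall c 1 := closure_ball c one_ne_zero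
    have hzc : z ∈ closure (ball c 1) := by rw [hcl]; exact hz
    haveI : (𝓝[ball c 1] z).NeBot := mem_closure_iff_nhdsWithin_neBot.mp hzc
    have ht : Filter.Tendsto F (𝓝[ball c 1] z) (𝓝 (F z)) :=
      (hFc z (hcb hz)).mono_left
        (nhdsWithin_mono z (ball_subset_closedBall.trans hcb))
    have ht2 : Filter.Tendsto F (𝓝[ball c 1] z) (𝓝 (F c)) :=
      tendsto_const_nhds.congr'
        ((eventually_mem_nhdsWithin).mono fun w hw => (hconst w hw).symm)
    exact tendsto_nhds_unique ht ht2
  have hb1 : ball (1:ℂ) 1 ⊆ interior K :=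
    interior_maximal (by rw [hKball]; exact ball_subset_closedBall.trans subset_union_left)
      isOpen_ball
  have hb2 : ball (-1:ℂ) 1 ⊆ interior K :=
    interior_maximal (by rw [hKball]; exact ball_subset_closedBall.trans subset_union_right)
      isOpen_ball
  have hc1 : closedBall (1:ℂ) 1 ⊆ K := by rw [hKball]; exact subset_union_left
  have hc2 : closedBall (-1:ℂ) 1 ⊆ K := by rw [hKball]; exact subset_union_right
  have h0K1 : (0:ℂ) ∈ closedBall (1:ℂ) 1 := by
    simp [Complex.dist_eq]
  have h0K2 : (0:ℂ) ∈ closedBall (-1:ℂ) 1 := by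
    simp [Complex.dist_eq]
  have e1 := hball 1 hb1 hc1 0 h0K1
  have e2 := hball (-1) hb2 hc2 0 h0K2
  refine ⟨F 0, fun z => ?_⟩
  rw [show f z = F (z:ℂ) from (hFK z z.2).symm]
  have hz : (z:ℂ) ∈ closedBall (1:ℂ) 1 ∪ closedBall (-1:ℂ) 1 := hKball ▸ z.2
  rcases hz with h | h
  · rw [hball 1 hb1 hc1 z h, ← e1]
  · rw [hball (-1) hb2 hc2 z h, ← e2]
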